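/- Let n ≥ 2 be an integer and let x₀ ∈ EuclideanSpace ℝ (Fin n) with ‖x₀‖ = 1. Define the truncated cone Σ := {x : ‖x − x₀‖ < 1/2 and ⟪x₀ − x, x₀⟫ > (3/4)·‖x − x₀‖}. Then Σ is open and nonempty, Σ ⊆ B (the open unit ball), and for every x ∈ Σ one has Metric.infDist x Bᶜ ≥ ‖x − x₀‖ / 2. -/

import Mathlib

open MeasureTheory Metric
open scoped ENNReal NNReal RealInnerProductSpace

noncomputable section

/-- The open unit ball in `EuclideanSpace ℝ (Fin n)`. -/
def Ball (n : ℕ) : Set (EuclideanSpace ℝ (Fin n)) := Metric.ball 0 1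

/-- The truncated revolution cone with vertex `x₀`. -/
def Cone (n : ℕ) (x₀ : EuclideanSpace ℝ (Fin n)) : Set (EuclideanSpace ℝ (Fin n)) :=
  {x | ‖x - x₀‖ < 1 / 2 ∧ (3 / 4 : ℝ) * ‖x - x₀‖ < ⟪x₀ - x, x₀⟫}

theorem cone_geometry (n : ℕ) (hn : 2 ≤ n) (x₀ : EuclideanSpace ℝ (Fin n))
    (hx₀ : ‖x₀‖ = 1) :
    IsOpen (Cone n x₀) ∧ (Cone n x₀).Nonempty ∧ Cone n x₀ ⊆ Ball n ∧
      ∀ x ∈ Cone n x₀, ‖x - x₀‖ / 2 ≤ Metric.infDist x (Ball n)ᶜ := by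
  -- key norm bound in the cone
  have key : ∀ x ∈ Cone n x₀, ‖x‖ ≤ 1 - ‖x - x₀‖ / 2 := by
    intro x hx
    obtain ⟨h1, h2⟩ := hx
    set r := ‖x - x₀‖ with hr
    have hr0 : 0 ≤ r := norm_nonneg _
    have hnx : 0 ≤ ‖x‖ := norm_nonneg _
    have e1 : ⟪x₀ - x, x₀⟫ = 1 - ⟪x, x₀⟫ := by
      rw [inner_sub_left, real_inner_self_eq_norm_sq, hx₀]; norm_num
    have e2 : r ^ 2 = ‖x‖ ^ 2 - 2 * ⟪x, x₀⟫ + 1 := by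
      rw [hr, @norm_sub_sq_real, hx₀]; ring
    have hsq : ‖x‖ ^ 2 = 1 - 2 * ⟪x₀ - x, x₀⟫ + r ^ 2 := by
      rw [e1, e2]; ring
    have hle : ‖x‖ ^ 2 ≤ (1 - r / 2) ^ 2 := by nlinarith
    have h12 : 0 ≤ 1 - r / 2 := by linarith
    nlinarith [sq_nonneg (‖x‖ - (1 - r / 2)), sq_nonneg (‖x‖ + (1 - r / 2))]
  have hsub : Cone n x₀ ⊆ Ball n := by
    intro x hx
    have hk := key x hx
    have hrpos : 0 < ‖x - x₀‖ := by
      rcases hx with ⟨h1, h2⟩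
      by_contra h
      push_neg at h
      have : ‖x - x₀‖ = 0 := le_antisymm h (norm_nonneg _)
      have hxx : x = x₀ := by
        rwa [norm_sub_eq_zero_iff] at this
      rw [this, hxx] at h2
      simp at h2
    simp only [Ball, mem_ball, dist_zero_right]
    linarith
  refine ⟨?_, ?_, hsub, ?_⟩
  · -- open
    have hc1 : Continuous fun x : EuclideanSpace ℝ (Fin n) => ‖x - x₀‖ :=
      (continuous_id.sub continuous_const).norm
    have hc2 : Continuous fun x : EuclideanSpace ℝ (Fin n) => ⟪x₀ - x, x₀⟫ :=
      (continuous_const.sub continuous_id).inner continuous_const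
    exact (isOpen_lt hc1 continuous_const).inter
      (isOpen_lt (continuous_const.mul hc1) hc2)
  · -- nonempty
    refine ⟨(3 / 4 : ℝ) • x₀, ?_, ?_⟩
    · have : (3 / 4 : ℝ) • x₀ - x₀ = (-(1 / 4) : ℝ) • x₀ := by module
      rw [this, norm_smul, hx₀]
      norm_num
    · have h1 : (3 / 4 : ℝ) • x₀ - x₀ = (-(1 / 4) : ℝ) • x₀ := by module
      have h2 : x₀ - (3 / 4 : ℝ) • x₀ = ((1 / 4) : ℝ) • x₀ := by module
      rw [h1, h2, norm_smul, real_inner_smul_left, real_inner_self_eq_norm_sq, hx₀]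
      norm_num
  · -- distance bound
    intro x hx
    have hk := key x hx
    set r := ‖x - x₀‖ with hr
    have hne : ((Ball n)ᶜ : Set (EuclideanSpace ℝ (Fin n))).Nonempty := by
      refine ⟨x₀, ?_⟩
      simp [Ball, hx₀]
    by_contra h
    push_neg at h
    obtain ⟨y, hy, hdy⟩ := (infDist_lt_iff hne).mp h
    have hy1 : 1 ≤ ‖y‖ := by
      simpa [Ball, mem_ball, dist_zero_right, not_lt] using hy
    have : ‖y‖ - ‖x‖ ≤ dist x y := by
      rw [dist_eq_norm, norm_sub_rev]
      exact norm_sub_norm_le _ _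
    linarith
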